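/- The set of irrational numbers α satisfying limsup_{n→∞} |{nα}|^{-1/n} = +∞ (the Cremer condition) is a dense G_δ subset of ℝ of Lebesgue measure zero. -/

import Mathlib

open Filter

/-- The set of irrational numbers satisfying Cremer's condition
`limsup |{nα}|^{-1/n} = +∞`. -/
def cremerSet : Set ℝ :=
  {α : ℝ | Irrational α ∧ ∀ C : ℝ, ∃ᶠ n : ℕ in atTop,
      C < Int.fract ((n : ℝ) * α) ^ (-(1 : ℝ) / (n : ℝ))}

noncomputable section

/-- the scale of approximation -/
def cDelta (m n : ℕ) : ℝ := ((m : ℝ) + 2) ^ (-(n : ℝ))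

/-- auxiliary open sets -/
def cU (m n : ℕ) : Set ℝ :=
  {α : ℝ | 0 < Int.fract ((n : ℝ) * α) ∧ Int.fract ((n : ℝ) * α) < cDelta m n}

lemma one_le_base (m : ℕ) : (1 : ℝ) ≤ (m : ℝ) + 2 := by
  have : (0 : ℝ) ≤ (m : ℝ) := Nat.cast_nonneg m
  linarith

lemma cDelta_pos (m n : ℕ) : 0 < cDelta m n :=
  Real.rpow_pos_of_pos (by linarith [one_le_base m]) _

lemma cDelta_le_one (m n : ℕ) : cDelta m n ≤ 1 :=
  Real.rpow_le_one_of_one_le_of_nonpos (one_le_base m)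
    (neg_nonpos.mpr (Nat.cast_nonneg n))

lemma fract_set_eq {δ : ℝ} (h0 : 0 < δ) (h1 : δ ≤ 1) :
    {x : ℝ | 0 < Int.fract x ∧ Int.fract x < δ} = ⋃ k : ℤ, Set.Ioo (k : ℝ) (k + δ) := by
  ext x
  simp only [Set.mem_setOf_eq, Set.mem_iUnion, Set.mem_Ioo]
  have hfx : Int.fract x = x - ⌊x⌋ := rfl
  constructor
  · rintro ⟨hx0, hxδ⟩
    rw [hfx] at hx0 hxδ
    exact ⟨⌊x⌋, by linarith, by linarith⟩
  · rintro ⟨k, hk1, hk2⟩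
    have hfl : ⌊x⌋ = k := by
      rw [Int.floor_eq_iff]
      exact ⟨hk1.le, by push_cast; linarith⟩
    rw [hfx, hfl]
    constructor <;> linarith
  
lemma isOpen_cU (m n : ℕ) : IsOpen (cU m n) := by
  have : cU m n = (fun α : ℝ => (n : ℝ) * α) ⁻¹'
      {x : ℝ | 0 < Int.fract x ∧ Int.fract x < cDelta m n} := rfl
  rw [this, fract_set_eq (cDelta_pos m n) (cDelta_le_one m n)]
  exact (isOpen_iUnion fun k => isOpen_Ioo).preimage (continuous_const.mul continuous_id)

/-- The key pointwise equivalence. -/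
lemma cremer_iff (α : ℝ) :
    (∀ C : ℝ, ∃ᶠ n : ℕ in atTop,
        C < Int.fract ((n : ℝ) * α) ^ (-(1 : ℝ) / (n : ℝ))) ↔
      ∀ m : ℕ, ∃ᶠ n : ℕ in atTop, α ∈ cU m n := by
  constructor
  · intro h m
    have h2 := (h ((m : ℝ) + 2)).and_eventually (eventually_ge_atTop 1)
    refine h2.mono ?_
    rintro n ⟨hn, hn1⟩
    have hnpos : (0 : ℝ) < (n : ℝ) := by exact_mod_cast hn1
    have hexpneg : -(1 : ℝ) / (n : ℝ) < 0 := div_neg_of_neg_of_pos (by norm_num) hnpos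
    set x := Int.fract ((n : ℝ) * α) with hx
    have hx0 : 0 ≤ x := Int.fract_nonneg _
    have hxpos : 0 < x := by
      rcases hx0.lt_or_eq with h' | h'
      · exact h'
      · exfalso
        rw [← h', Real.zero_rpow (ne_of_lt hexpneg)] at hn
        linarith [one_le_base m]
    refine ⟨hxpos, ?_⟩
    have h1 : ((m : ℝ) + 2) ^ (n : ℝ) < (x ^ (-(1 : ℝ) / (n : ℝ))) ^ (n : ℝ) :=
      Real.rpow_lt_rpow (by linarith [one_le_base m]) hn hnpos
    rw [← Real.rpow_mul hx0] at h1
    have hexp : -(1 : ℝ) / (n : ℝ) * (n : ℝ) = -1 := by field_simp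
    rw [hexp, Real.rpow_neg_one] at h1
    have hb : (0 : ℝ) < ((m : ℝ) + 2) ^ (n : ℝ) :=
      Real.rpow_pos_of_pos (by linarith [one_le_base m]) _
    have h3 := (inv_lt_inv₀ (by positivity) hb).mpr h1
    rw [inv_inv] at h3
    simp only [cDelta]
    rwa [Real.rpow_neg (by linarith [one_le_base m])]
  · intro h C
    obtain ⟨m, hm⟩ := exists_nat_ge C
    have h2 := (h m).and_eventually (eventually_ge_atTop 1)
    refine h2.mono ?_
    rintro n ⟨⟨hx0, hxδ⟩, hn1⟩
    have hnpos : (0 : ℝ) < (n : ℝ) := by exact_mod_cast hn1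
    have hexpneg : -(1 : ℝ) / (n : ℝ) < 0 := div_neg_of_neg_of_pos (by norm_num) hnpos
    have key : (cDelta m n) ^ (-(1 : ℝ) / (n : ℝ)) <
        Int.fract ((n : ℝ) * α) ^ (-(1 : ℝ) / (n : ℝ)) :=
      Real.rpow_lt_rpow_of_neg hx0 hxδ hexpneg
    simp only [cDelta] at key
    rw [← Real.rpow_mul (by linarith [one_le_base m])] at key
    have hexp : -(n : ℝ) * (-(1 : ℝ) / (n : ℝ)) = 1 := by field_simp
    rw [hexp, Real.rpow_one] at key
    linarith

/-- auxiliary dense open sets -/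
def cW (m N : ℕ) : Set ℝ := ⋃ n, ⋃ (_ : N ≤ n), cU m n

lemma isOpen_cW (m N : ℕ) : IsOpen (cW m N) :=
  isOpen_iUnion fun n => isOpen_iUnion fun _ => isOpen_cU m n

lemma dense_cW (m N : ℕ) : Dense (cW m N) := by
  rw [Metric.dense_iff]
  intro x r hr
  set n : ℕ := max (max N 1) (⌈r⁻¹⌉₊ + 1) with hn
  have hnN : N ≤ n := le_trans (le_max_left _ _) (le_max_left _ _)
  have hn1 : 1 ≤ n := le_trans (le_max_right _ _) (le_max_left _ _)
  have hβ : (0 : ℝ) < (n : ℝ) := by exact_mod_cast hn1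
  have hrn : r⁻¹ < (n : ℝ) := by
    have h1 : r⁻¹ ≤ (⌈r⁻¹⌉₊ : ℝ) := Nat.le_ceil _
    have h2 : (⌈r⁻¹⌉₊ + 1 : ℕ) ≤ n := le_max_right _ _
    have h3 : ((⌈r⁻¹⌉₊ + 1 : ℕ) : ℝ) ≤ (n : ℝ) := by exact_mod_cast h2
    push_cast at h3
    linarith
  have hinv : (1 : ℝ) < r * (n : ℝ) := by
    have h4 := mul_lt_mul_of_pos_left hrn hr
    rwa [mul_inv_cancel₀ (ne_of_gt hr)] at h4
  set δ : ℝ := cDelta m n with hδ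
  have hδ0 : 0 < δ := cDelta_pos m n
  have hδ1 : δ ≤ 1 := cDelta_le_one m n
  set k : ℤ := ⌊(n : ℝ) * x⌋ with hk
  have h1 : (k : ℝ) ≤ (n : ℝ) * x := Int.floor_le _
  have h2 : (n : ℝ) * x < (k : ℝ) + 1 := Int.lt_floor_add_one _
  refine ⟨((k : ℝ) + δ / 2) / (n : ℝ), ?_, ?_⟩
  · -- in ball
    have hα : ((k : ℝ) + δ / 2) / (n : ℝ) - x = ((k : ℝ) + δ / 2 - (n : ℝ) * x) / (n : ℝ) := by
      field_simp
    rw [Metric.mem_ball, Real.dist_eq, hα, abs_div, abs_of_pos hβ, div_lt_iff₀ hβ]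
    have habs : |(k : ℝ) + δ / 2 - (n : ℝ) * x| < 1 := by
      rw [abs_lt]
      constructor <;> linarith
    calc |(k : ℝ) + δ / 2 - (n : ℝ) * x| < 1 := habs
      _ < r * (n : ℝ) := hinv
  · -- in cW
    refine Set.mem_iUnion.mpr ⟨n, Set.mem_iUnion.mpr ⟨hnN, ?_⟩⟩
    have hβα : (n : ℝ) * (((k : ℝ) + δ / 2) / (n : ℝ)) = (k : ℝ) + δ / 2 := by
      field_simp
    have hfr : Int.fract ((n : ℝ) * (((k : ℝ) + δ / 2) / (n : ℝ))) = δ / 2 := by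
      rw [hβα, Int.fract_intCast_add, Int.fract_eq_self.mpr ⟨by linarith, by linarith⟩]
    exact ⟨by rw [hfr]; linarith, by rw [hfr]; linarith⟩

lemma cremerSet_eq : cremerSet = {α : ℝ | Irrational α} ∩ ⋂ m, ⋂ N, cW m N := by
  ext α
  simp only [cremerSet, Set.mem_setOf_eq, Set.mem_inter_iff, Set.mem_iInter, cW,
    Set.mem_iUnion]
  refine and_congr_right fun _ => ?_
  rw [cremer_iff]
  constructor
  · intro h m N
    obtain ⟨n, hn, hmem⟩ := (frequently_atTop.mp (h m)) N
    exact ⟨n, hn, hmem⟩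
  · intro h m
    rw [frequently_atTop]
    intro N
    obtain ⟨n, hn, hmem⟩ := h m N
    exact ⟨n, hn, hmem⟩

lemma isGδ_cremerSet : IsGδ cremerSet := by
  rw [cremerSet_eq]
  exact IsGδ.setOf_irrational.inter
    (IsGδ.iInter fun m => IsGδ.iInter fun N => (isOpen_cW m N).isGδ)

lemma dense_cremerSet : Dense cremerSet := by
  rw [cremerSet_eq]
  have hG : IsGδ (⋂ m, ⋂ N, cW m N) :=
    IsGδ.iInter fun m => IsGδ.iInter fun N => (isOpen_cW m N).isGδ
  have hD : Dense (⋂ m, ⋂ N, cW m N) := by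
    have heq : (⋂ m, ⋂ N, cW m N) = ⋂ p : ℕ × ℕ, cW p.1 p.2 := by
      ext α; simp [Set.mem_iInter, Prod.forall]
    rw [heq]
    exact dense_iInter_of_isOpen (fun p => isOpen_cW p.1 p.2)
      (fun p => dense_cW p.1 p.2)
  exact Dense.inter_of_Gδ IsGδ.setOf_irrational hG dense_irrational hD

lemma volume_cU_inter (j : ℤ) (n : ℕ) (hn : 1 ≤ n) :
    MeasureTheory.volume (cU 0 n ∩ Set.Ico (j : ℝ) (j + 1)) ≤
      ENNReal.ofReal (cDelta 0 n) := by
  set δ : ℝ := cDelta 0 n with hδ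
  have hδ0 : 0 < δ := cDelta_pos 0 n
  have hδ1 : δ ≤ 1 := cDelta_le_one 0 n
  have hβ : (0 : ℝ) < (n : ℝ) := by exact_mod_cast hn
  have hsub : cU 0 n ∩ Set.Ico (j : ℝ) (j + 1) ⊆
      ⋃ k ∈ Finset.range n, Set.Ioo (((j * (n : ℤ) + (k : ℤ) : ℤ) : ℝ) / n)
        (((j * (n : ℤ) + (k : ℤ) : ℤ) : ℝ) / n + δ / n) := by
    rintro α ⟨⟨hf0, hfδ⟩, hj1, hj2⟩
    set K : ℤ := ⌊(n : ℝ) * α⌋ with hK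
    have hfr : Int.fract ((n : ℝ) * α) = (n : ℝ) * α - K := rfl
    rw [hfr] at hf0 hfδ
    have hK1 : (j * (n : ℤ) : ℤ) ≤ K := by
      apply Int.le_floor.mpr
      push_cast
      nlinarith
    have hK2 : K < j * (n : ℤ) + (n : ℤ) := by
      apply Int.floor_lt.mpr
      push_cast
      nlinarith
    set k : ℕ := (K - j * (n : ℤ)).toNat with hk
    have hkK : (j * (n : ℤ) + (k : ℤ) : ℤ) = K := by
      rw [hk, Int.toNat_of_nonneg (by omega)]; ring
    have hkmem : k ∈ Finset.range n := Finset.mem_range.mpr (by omega)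
    refine Set.mem_biUnion hkmem ?_
    rw [hkK]
    constructor
    · rw [div_lt_iff₀ hβ]
      nlinarith
    · rw [← add_div, lt_div_iff₀ hβ]
      nlinarith
  calc MeasureTheory.volume (cU 0 n ∩ Set.Ico (j : ℝ) (j + 1))
      ≤ MeasureTheory.volume (⋃ k ∈ Finset.range n,
          Set.Ioo (((j * (n : ℤ) + (k : ℤ) : ℤ) : ℝ) / n)
            (((j * (n : ℤ) + (k : ℤ) : ℤ) : ℝ) / n + δ / n)) :=
        MeasureTheory.measure_mono hsub
    _ ≤ ∑ k ∈ Finset.range n, MeasureTheory.volume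
          (Set.Ioo (((j * (n : ℤ) + (k : ℤ) : ℤ) : ℝ) / n)
            (((j * (n : ℤ) + (k : ℤ) : ℤ) : ℝ) / n + δ / n)) :=
        MeasureTheory.measure_biUnion_finset_le _ _
    _ = ∑ k ∈ Finset.range n, ENNReal.ofReal (δ / n) := by
        refine Finset.sum_congr rfl fun k _ => ?_
        rw [Real.volume_Ioo]
        congr 1
        ring
    _ = n * ENNReal.ofReal (δ / n) := by
        rw [Finset.sum_const, Finset.card_range, nsmul_eq_mul]
    _ = ENNReal.ofReal δ := by
        rw [← ENNReal.ofReal_natCast n, ← ENNReal.ofReal_mul (by positivity)]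
        congr 1
        field_simp

lemma volume_cremer_inter (j : ℤ) :
    MeasureTheory.volume (cremerSet ∩ Set.Ico (j : ℝ) (j + 1)) = 0 := by
  set s : ℕ → Set ℝ := fun n => cU 0 n ∩ Set.Ico (j : ℝ) (j + 1) with hs
  have hsum : ∑' n, MeasureTheory.volume (s n) ≠ ⊤ := by
    have hle : ∀ n, MeasureTheory.volume (s n) ≤ (2⁻¹ : ENNReal) ^ n := by
      intro n
      rcases Nat.eq_zero_or_pos n with h0 | h1
      · subst h0
        have he : s 0 = ∅ := by
          ext α
          simp [hs, cU, Int.fract_zero]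
        simp [he]
      · refine (volume_cU_inter j n h1).trans ?_
        have hd : cDelta 0 n = ((2 : ℝ)⁻¹) ^ n := by
          rw [cDelta, show ((0 : ℕ) : ℝ) + 2 = 2 by norm_num,
            Real.rpow_neg (by norm_num), Real.rpow_natCast, ← inv_pow]
        rw [hd, ENNReal.ofReal_pow (by norm_num)]
        gcongr
        rw [ENNReal.ofReal_inv_of_pos (by norm_num)]
        norm_num
    refine ne_top_of_le_ne_top ?_ (ENNReal.tsum_le_tsum hle)
    rw [ENNReal.tsum_geometric]
    simp [ENNReal.sub_half]
  have hlim := MeasureTheory.measure_limsup_atTop_eq_zero hsum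
  refine MeasureTheory.measure_mono_null ?_ hlim
  rintro α ⟨hα, hIco⟩
  rw [Filter.mem_limsup_iff_frequently_mem]
  have hfreq := (cremer_iff α).mp hα.2 0
  exact hfreq.mono fun n hn => ⟨hn, hIco⟩

lemma volume_cremerSet : MeasureTheory.volume cremerSet = 0 := by
  have hU : cremerSet = ⋃ j : ℤ, (cremerSet ∩ Set.Ico (j : ℝ) (j + 1)) := by
    rw [← Set.inter_iUnion, iUnion_Ico_intCast, Set.inter_univ]
  rw [hU]
  exact MeasureTheory.measure_iUnion_null fun j => volume_cremer_inter j

end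

/-- The set of irrationals satisfying Cremer's condition is a dense `Gδ` of Lebesgue
measure zero. -/
theorem stmt6 : IsGδ cremerSet ∧ Dense cremerSet ∧ MeasureTheory.volume cremerSet = 0 :=
  ⟨isGδ_cremerSet, dense_cremerSet, volume_cremerSet⟩
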